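/- If a conditional distribution P_{Q|X} (with Q a random pmf on 𝒳) achieves the log-loss rate-distortion function at distortion D, i.e., I(X;Q) = H(X) − D and E[−log Q(X)] ≤ D, then P_{X|Q}(·|q) = q for P_Q-almost every q, and H(X|Q) = D. -/

import Mathlib

open Real Finset

lemma term_le {f g : ℝ} (hf : 0 ≤ f) (h : 0 < f → 0 < g) (hg : 0 ≤ g) :
    f * Real.log (g / f) ≤ g - f := by
  rcases hf.eq_or_lt with h0 | h0
  · simp [← h0, hg]
  · have hg' := h h0
    have hl := Real.log_le_sub_one_of_pos (div_pos hg' h0)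
    have hc : f * (g / f) = g := mul_div_cancel₀ g h0.ne'
    nlinarith

lemma term_eq {f g : ℝ} (hf : 0 ≤ f) (h : 0 < f → 0 < g) (hg : 0 ≤ g)
    (heq : f * Real.log (g / f) = g - f) : f = g := by
  rcases hf.eq_or_lt with h0 | h0
  · rw [← h0] at heq ⊢; simp at heq; linarith
  · have hg' := h h0
    by_contra hne
    have hd : g / f ≠ 1 := by
      intro h1
      exact hne ((div_eq_one_iff_eq h0.ne').mp h1).symm
    have hl := Real.log_lt_sub_one_of_pos (div_pos hg' h0) hd
    have hc : f * (g / f) = g := mul_div_cancel₀ g h0.ne'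
    nlinarith

/-- If a conditional distribution `P_{Q|X}` (joint `w`, with `Q` taking pmf values
`φ b`) achieves the log-loss rate-distortion function at level `D`, i.e.
`I(X;Q) = H(X) − D` and `E[−log Q(X)] ≤ D`, then `P_{X|Q}(·|q) = q` for every `q`
of positive probability, and `H(X|Q) = D`. -/
theorem stmt_3 {α β : Type*} [Fintype α] [Fintype β]
    (w : α → β → ℝ)                    -- joint pmf of (X, Q), Q indexed by β
    (hw0 : ∀ x b, 0 ≤ w x b) (hw1 : ∑ x, ∑ b, w x b = 1)
    (φ : β → α → ℝ)                    -- the pmf value of Q at index b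
    (hφ0 : ∀ b x, 0 ≤ φ b x) (hφ1 : ∀ b, ∑ x, φ b x = 1)
    (hsupp : ∀ x b, 0 < w x b → 0 < φ b x)
    (D : ℝ)
    -- I(X;Q) = H(X) − H(X|Q) equals H(X) − D:
    (hI : (∑ x, negMulLog (∑ b, w x b))
        - (∑ b, ∑ x, w x b * (-Real.log (w x b / ∑ x', w x' b)))
        = (∑ x, negMulLog (∑ b, w x b)) - D)
    -- E[−log Q(X)] ≤ D:
    (hE : ∑ x, ∑ b, w x b * (-Real.log (φ b x)) ≤ D) :
    (∀ b, 0 < ∑ x, w x b → ∀ x, w x b / (∑ x', w x' b) = φ b x) ∧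
    (∑ b, ∑ x, w x b * (-Real.log (w x b / ∑ x', w x' b)) = D) := by
  set s : β → ℝ := fun b => ∑ x', w x' b with hs
  have hs0 : ∀ b, 0 ≤ s b := fun b => Finset.sum_nonneg fun x _ => hw0 x b
  have hsx : ∀ x b, w x b ≤ s b := fun x b =>
    Finset.single_le_sum (fun x' _ => hw0 x' b) (Finset.mem_univ x)
  have hD : ∑ b, ∑ x, w x b * (-Real.log (w x b / s b)) = D := by linarith
  -- g b x := s b * φ b x ; positivity on support
  have hgpos : ∀ b x, 0 < w x b → 0 < s b * φ b x := fun b x h =>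
    mul_pos (lt_of_lt_of_le h (hsx x b)) (hsupp x b h)
  have hg0 : ∀ b x, 0 ≤ s b * φ b x := fun b x => mul_nonneg (hs0 b) (hφ0 b x)
  -- termwise identity relating the two losses
  have hterm : ∀ b x, w x b * (-Real.log (φ b x)) - w x b * (-Real.log (w x b / s b))
      = -(w x b * Real.log ((s b * φ b x) / w x b)) := by
    intro b x
    rcases (hw0 x b).eq_or_lt with h0 | h0
    · simp [← h0]
    · have hsb : 0 < s b := lt_of_lt_of_le h0 (hsx x b)
      have hφb : 0 < φ b x := hsupp x b h0
      rw [Real.log_div (mul_pos hsb hφb).ne' h0.ne',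
          Real.log_div h0.ne' hsb.ne', Real.log_mul hsb.ne' hφb.ne']
      ring
  -- per-b Gibbs inequality
  have hgsum : ∀ b, ∑ x, (s b * φ b x - w x b) = 0 := by
    intro b
    rw [Finset.sum_sub_distrib, ← Finset.mul_sum, hφ1 b, mul_one]
    simp [hs]
  have hKL : ∀ b, ∑ x, w x b * Real.log ((s b * φ b x) / w x b) ≤ 0 := by
    intro b
    calc ∑ x, w x b * Real.log ((s b * φ b x) / w x b)
        ≤ ∑ x, (s b * φ b x - w x b) :=
          Finset.sum_le_sum fun x _ => term_le (hw0 x b) (hgpos b x) (hg0 b x)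
      _ = 0 := hgsum b
  -- the difference of the two total losses
  have hdiff : ∑ b, (∑ x, w x b * (-Real.log (φ b x))
      - ∑ x, w x b * (-Real.log (w x b / s b)))
      = ∑ b, -(∑ x, w x b * Real.log ((s b * φ b x) / w x b)) := by
    refine Finset.sum_congr rfl fun b _ => ?_
    rw [← Finset.sum_sub_distrib, ← Finset.sum_neg_distrib]
    exact Finset.sum_congr rfl fun x _ => hterm b x
  have hExch : ∑ x, ∑ b, w x b * (-Real.log (φ b x))
      = ∑ b, ∑ x, w x b * (-Real.log (φ b x)) := Finset.sum_comm
  have hle : ∑ b, -(∑ x, w x b * Real.log ((s b * φ b x) / w x b)) ≤ 0 := by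
    rw [← hdiff, Finset.sum_sub_distrib]
    rw [hExch] at hE
    linarith
  have hzero : ∀ b, ∑ x, w x b * Real.log ((s b * φ b x) / w x b) = 0 := by
    have := (Finset.sum_eq_zero_iff_of_nonneg
      (fun b _hb => neg_nonneg.mpr (hKL b))).mp
      (le_antisymm hle (Finset.sum_nonneg fun b _ => neg_nonneg.mpr (hKL b)))
    intro b
    have := this b (Finset.mem_univ b)
    linarith
  refine ⟨fun b hb x => ?_, hD⟩
  have hsumeq : ∑ x, w x b * Real.log ((s b * φ b x) / w x b)
      = ∑ x, (s b * φ b x - w x b) := by rw [hzero b, hgsum b]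
  have heach := (Finset.sum_eq_sum_iff_of_le
    (fun x _ => term_le (hw0 x b) (hgpos b x) (hg0 b x))).mp hsumeq
  have hwx : w x b = s b * φ b x :=
    term_eq (hw0 x b) (hgpos b x) (hg0 b x) (heach x (Finset.mem_univ x))
  rw [hwx]
  field_simp
  exact mul_comm _ _
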